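/- For all integers r ≥ 2 and j ≥ 1, the series μ(r, j) = Σ_{n=1}^∞ 1/(n^r (n+j)) satisfies the closed form μ(r, j) = Σ_{k=1}^{r−1} (−1)^{k−1} · ζ(r+1−k) / j^k + (−1)^{r−1} · H_j / j^r, where H_j is the j-th harmonic number and ζ the Riemann zeta function. -/

import Mathlib

open Finset Real

/-- The generalized harmonic number `H_n^{(p)} = ∑_{k=1}^n 1/k^p`. -/
noncomputable def gH (p : ℤ) (n : ℕ) : ℝ := ∑ k ∈ Finset.Icc 1 n, ((k : ℝ) ^ p)⁻¹

/-- The generalized hyperharmonic number `H_n^{(p,q)}`: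
`H_n^{(p,0)} = 1/n^p` (with `H_0^{(p,q)} = 0`) and
`H_n^{(p,q)} = ∑_{k=1}^n H_k^{(p,q-1)}` for `q ≥ 1`. -/
noncomputable def gHH (p : ℤ) : ℕ → ℕ → ℝ
  | 0, n => if n = 0 then 0 else ((n : ℝ) ^ p)⁻¹
  | q + 1, n => ∑ k ∈ Finset.Icc 1 n, gHH p q k

/-- Euler sum of generalized harmonic numbers `ζ_{H^{(p)}}(r) = ∑_{n≥1} H_n^{(p)}/n^r`. -/
noncomputable def eulerSum (p r : ℤ) : ℝ := ∑' n : ℕ+, gH p n / (n : ℝ) ^ r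

/-- Euler sum of generalized hyperharmonic numbers
`ζ_{H^{(p,q)}}(r) = ∑_{n≥1} H_n^{(p,q)}/n^r`. -/
noncomputable def eulerSumHH (p : ℤ) (q : ℕ) (r : ℤ) : ℝ := ∑' n : ℕ+, gHH p q n / (n : ℝ) ^ r

/-- Riemann zeta value at an integer argument, `ζ(s) = ∑_{n≥1} 1/n^s`. -/
noncomputable def zv (s : ℤ) : ℝ := ∑' n : ℕ+, ((n : ℝ) ^ s)⁻¹

/-- Unsigned Stirling numbers of the first kind, defined by
`x(x+1)⋯(x+q-1) = ∑_{k=0}^q [q,k] x^k`, i.e. `[n+1,k] = [n,k-1] + n·[n,k]`. -/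
def stirlingFirst : ℕ → ℕ → ℕ
  | 0, 0 => 1
  | 0, _ + 1 => 0
  | _ + 1, 0 => 0
  | n + 1, k + 1 => stirlingFirst n k + n * stirlingFirst n (k + 1)

/-- The series `μ(r,j) = ∑_{n≥1} 1/(n^r (n+j))`. -/
noncomputable def mu (r j : ℕ) : ℝ := ∑' n : ℕ+, 1 / ((n : ℝ) ^ r * ((n : ℝ) + j))

/-- `e_j(n+1, n+2, …, n+q)`: the `j`-th elementary symmetric polynomial
evaluated at the numbers `n+1, …, n+q`. -/
noncomputable def esymmVal (n q j : ℕ) : ℝ :=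
  ∑ s ∈ Finset.powersetCard j (Finset.Icc 1 q), ∏ i ∈ s, ((n : ℝ) + i)

/- auxiliary lemmas -/

lemma my_hasSum_pnat_iff (f : ℕ+ → ℝ) (a : ℝ) :
    HasSum f a ↔ HasSum (fun n : ℕ => f n.succPNat) a := by
  rw [← Equiv.pnatEquivNat.symm.hasSum_iff]; rfl

lemma my_summable_pnat_iff (f : ℕ+ → ℝ) :
    Summable f ↔ Summable (fun n : ℕ => f n.succPNat) := by
  rw [← Equiv.pnatEquivNat.symm.summable_iff]; rfl

lemma my_cast_succPNat (n : ℕ) : ((n.succPNat : ℕ+) : ℝ) = (n : ℝ) + 1 := by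
  push_cast [Nat.succPNat_coe]; ring

lemma my_icc_sum (f : ℕ → ℝ) (m : ℕ) :
    ∑ k ∈ Finset.Icc 1 m, f k = ∑ i ∈ Finset.range m, f (1 + i) := by
  rw [← Finset.Ico_add_one_right_eq_Icc, Finset.sum_Ico_eq_sum_range]; simp

lemma my_summable_inv_pow (s : ℕ) (hs : 2 ≤ s) :
    Summable fun n : ℕ+ => ((n : ℝ) ^ s)⁻¹ := by
  have h : Summable fun n : ℕ => ((n : ℝ) ^ s)⁻¹ := by
    simpa [one_div] using Real.summable_one_div_nat_pow.mpr (by omega : 1 < s)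
  exact h.comp_injective (fun a b hab => PNat.coe_injective hab)

lemma my_summable_mu (r j : ℕ) (hr : 1 ≤ r) :
    Summable fun n : ℕ+ => 1 / ((n : ℝ) ^ r * ((n : ℝ) + j)) := by
  apply Summable.of_nonneg_of_le (fun n => by positivity) ?_ (my_summable_inv_pow 2 le_rfl)
  intro n
  have h1 : (1 : ℝ) ≤ (n : ℝ) := by exact_mod_cast n.one_le
  have h2 : (n : ℝ) ^ 2 ≤ (n : ℝ) ^ r * ((n : ℝ) + j) := by
    have e : (n : ℝ) ^ 2 = (n : ℝ) ^ 1 * ((n : ℝ) + 0) := by ring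
    rw [e]
    apply mul_le_mul (pow_le_pow_right₀ h1 hr) (by simp) (by positivity) (by positivity)
  rw [one_div]
  exact inv_anti₀ (by positivity) h2

lemma my_mu_one (j : ℕ) (hj : 1 ≤ j) : mu 1 j = gH 1 j / j := by
  have hj0 : (0 : ℝ) < j := by exact_mod_cast hj
  have hA : gH 1 j = ∑ i ∈ Finset.range j, 1 / ((i : ℝ) + 1) := by
    rw [gH, my_icc_sum]
    refine Finset.sum_congr rfl fun i _ => ?_
    push_cast
    rw [zpow_one, one_div, add_comm]
  rw [mu]
  refine HasSum.tsum_eq ?_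
  rw [my_hasSum_pnat_iff]
  have hfun : (fun n : ℕ => 1 / ((n.succPNat : ℝ) ^ 1 * ((n.succPNat : ℝ) + j)))
      = fun n : ℕ => 1 / (((n : ℝ) + 1) * (((n : ℝ) + 1) + j)) := by
    funext n; rw [my_cast_succPNat, pow_one]
  rw [hfun]
  have hsum : Summable fun n : ℕ => 1 / (((n : ℝ) + 1) * (((n : ℝ) + 1) + j)) := by
    have := (my_summable_pnat_iff _).mp (my_summable_mu 1 j le_rfl)
    simp only [pow_one] at this
    simpa [my_cast_succPNat] using this
  rw [hsum.hasSum_iff_tendsto_nat]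
  have closed : ∀ N : ℕ, ∑ n ∈ Finset.range N, 1 / (((n : ℝ) + 1) * (((n : ℝ) + 1) + j))
      = (∑ i ∈ Finset.range j, 1 / ((i : ℝ) + 1)
          - ∑ i ∈ Finset.range j, 1 / ((N : ℝ) + (i : ℝ) + 1)) / j := by
    intro N
    induction N with
    | zero => simp
    | succ N ih =>
      have hsub : ∑ i ∈ Finset.range j, 1 / (((N + 1 : ℕ) : ℝ) + (i : ℝ) + 1)
          = ∑ i ∈ Finset.range j, 1 / ((N : ℝ) + (i : ℝ) + 1)
            - (1 / ((N : ℝ) + 1) - 1 / ((N : ℝ) + (j : ℝ) + 1)) := by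
        have key := Finset.sum_range_sub' (fun i : ℕ => 1 / ((N : ℝ) + (i : ℝ) + 1)) j
        rw [Finset.sum_sub_distrib] at key
        have hC : ∑ i ∈ Finset.range j, 1 / (((N + 1 : ℕ) : ℝ) + (i : ℝ) + 1)
            = ∑ i ∈ Finset.range j, 1 / ((N : ℝ) + ((i : ℝ) + 1) + 1) :=
          Finset.sum_congr rfl fun i _ => by push_cast; ring_nf
        rw [hC]
        push_cast at key
        rw [show ((N : ℝ) + 0 + 1) = (N : ℝ) + 1 by ring] at key
        linarith [key]
      rw [Finset.sum_range_succ, ih, hsub]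
      have hN1 : ((N : ℝ) + 1) ≠ 0 := by positivity
      have hNj : ((N : ℝ) + 1 + (j : ℝ)) ≠ 0 := by positivity
      have hj' : (j : ℝ) ≠ 0 := hj0.ne'
      field_simp
      ring
  simp only [closed]
  have hT : Filter.Tendsto (fun N : ℕ => ∑ i ∈ Finset.range j, 1 / ((N : ℝ) + (i : ℝ) + 1))
      Filter.atTop (nhds 0) := by
    rw [show (0 : ℝ) = ∑ _i ∈ Finset.range j, (0 : ℝ) by simp]
    refine tendsto_finset_sum _ fun i _ => ?_
    have h1 : Filter.Tendsto (fun N : ℕ => (N : ℝ) + (i : ℝ) + 1) Filter.atTop Filter.atTop :=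
      Filter.tendsto_atTop_add_const_right _ _
        (Filter.tendsto_atTop_add_const_right _ _ tendsto_natCast_atTop_atTop)
    simp only [one_div]; exact h1.inv_tendsto_atTop
  have hlim := (Filter.Tendsto.sub (tendsto_const_nhds
    (x := ∑ i ∈ Finset.range j, 1 / ((i : ℝ) + 1))) hT).div_const (j : ℝ)
  simpa [hA] using hlim

lemma my_zv_nat (s : ℕ) : zv (s : ℤ) = ∑' n : ℕ+, ((n : ℝ) ^ s)⁻¹ := by
  exact tsum_congr fun n => by rw [zpow_natCast]

lemma my_mu_succ (r j : ℕ) (hr : 1 ≤ r) (hj : 1 ≤ j) :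
    mu (r + 1) j = (zv ((r : ℤ) + 1) - mu r j) / j := by
  have hj0 : (0 : ℝ) < j := by exact_mod_cast hj
  have hz : Summable fun n : ℕ+ => ((n : ℝ) ^ (r + 1))⁻¹ :=
    my_summable_inv_pow (r + 1) (by omega)
  have hm : Summable fun n : ℕ+ => 1 / ((n : ℝ) ^ r * ((n : ℝ) + j)) :=
    my_summable_mu r j hr
  have hzv : zv ((r : ℤ) + 1) = ∑' n : ℕ+, ((n : ℝ) ^ (r + 1))⁻¹ := by
    have : ((r : ℤ) + 1) = ((r + 1 : ℕ) : ℤ) := by push_cast; ring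
    rw [this, my_zv_nat]
  have key : HasSum
      (fun n : ℕ+ => (((n : ℝ) ^ (r + 1))⁻¹ - 1 / ((n : ℝ) ^ r * ((n : ℝ) + j))) / j)
      ((zv ((r : ℤ) + 1) - mu r j) / j) := by
    rw [hzv, mu]
    exact (hz.hasSum.sub hm.hasSum).div_const _
  rw [mu]
  refine HasSum.tsum_eq ?_
  convert key using 1
  funext n
  have hn : (0 : ℝ) < n := by exact_mod_cast n.pos
  have hnj : (n : ℝ) + j ≠ 0 := by positivity
  field_simp
  ring


/-- Closed form of `μ(r,j) = ∑_{n≥1} 1/(n^r (n+j))` for `r ≥ 2`, `j ≥ 1`. -/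
theorem stmt_13 (r j : ℕ) (hr : 2 ≤ r) (hj : 1 ≤ j) :
    mu r j
      = ∑ k ∈ Finset.Icc 1 (r - 1),
          (-1 : ℝ) ^ (k - 1) * zv ((r : ℤ) + 1 - k) / (j : ℝ) ^ k
        + (-1 : ℝ) ^ (r - 1) * gH 1 j / (j : ℝ) ^ r := by
  have hj0 : (0 : ℝ) < j := by exact_mod_cast hj
  have main : ∀ r : ℕ, 1 ≤ r → mu r j
      = ∑ k ∈ Finset.Icc 1 (r - 1),
          (-1 : ℝ) ^ (k - 1) * zv ((r : ℤ) + 1 - k) / (j : ℝ) ^ k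
        + (-1 : ℝ) ^ (r - 1) * gH 1 j / (j : ℝ) ^ r := by
    intro r hr1
    induction r, hr1 using Nat.le_induction with
    | base => simpa using my_mu_one j hj
    | succ r hr1 ih =>
      obtain ⟨s, rfl⟩ : ∃ s, r = s + 1 := ⟨r - 1, by omega⟩
      rw [my_mu_succ _ j (by omega) hj, ih]
      simp only [Nat.add_sub_cancel]
      rw [my_icc_sum, my_icc_sum (m := s + 1), Finset.sum_range_succ']
      have hterm : ∀ i ∈ Finset.range s,
          (-1 : ℝ) ^ ((1 + (i + 1)) - 1) * zv (((s + 1 + 1 : ℕ) : ℤ) + 1 - ((1 + (i + 1) : ℕ) : ℤ))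
              / (j : ℝ) ^ (1 + (i + 1))
          = -(((-1 : ℝ) ^ ((1 + i) - 1) * zv (((s + 1 : ℕ) : ℤ) + 1 - ((1 + i : ℕ) : ℤ))
              / (j : ℝ) ^ (1 + i)) / j) := by
        intro i _
        have harg : ((s + 1 + 1 : ℕ) : ℤ) + 1 - ((1 + (i + 1) : ℕ) : ℤ)
            = ((s + 1 : ℕ) : ℤ) + 1 - ((1 + i : ℕ) : ℤ) := by push_cast; ring
        rw [harg]
        have h1 : (1 + (i + 1)) - 1 = i + 1 := by omega
        have h2 : (1 + i) - 1 = i := by omega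
        rw [h1, h2]
        field_simp
        ring
      rw [Finset.sum_congr rfl hterm]
      rw [Finset.sum_neg_distrib]
      have hZ : ((s + 1 + 1 : ℕ) : ℤ) + 1 - ((1 + 0 : ℕ) : ℤ) = ((s + 1 : ℕ) : ℤ) + 1 := by
        push_cast; ring
      rw [hZ, ← Finset.sum_div]
      have hj' : (j : ℝ) ≠ 0 := hj0.ne'
      norm_num [pow_succ]
      field_simp
      ring
  exact main r (by omega)
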